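/- Let ū₂, ū₄, ũ₄ be real numbers with 1 + ū₂ ≠ 0 and 48·ū₂ + 2 ≠ 0. Define ũ₆₁ = (144/π)·ũ₄²·ū₄/(1 + ū₂)³ and ũ₆₂ = (48/π)·ũ₄³/(1 + ū₂)³. If 2·ū₂ + (2/π)·ū₄/(1 + ū₂)² + (1/π)·ũ₄/(1 + ū₂)² = 0 and 4·ũ₄ + (4/(3π))·ũ₆₁/(1 + ū₂)² + (2/π)·ũ₆₂/(1 + ū₂)² − (8/π)·ũ₄²/(1 + ū₂)³ = 0, then ũ₄ = 0 or ũ₄ = π·(1 + ū₂)³/(48·ū₂ + 2). -/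

import Mathlib

open Real

/-- EVE fixed-point branches for the quartic `p = 2` model: given the effective
sextic couplings `ũ₆₁ = (144/π)ũ₄²ū₄/(1+ū₂)³` and `ũ₆₂ = (48/π)ũ₄³/(1+ū₂)³`,
the vanishing of the flows of `ū₂` and `ũ₄` forces either `ũ₄ = 0` or
`ũ₄ = π(1+ū₂)³/(48ū₂+2)`. -/
theorem eve_quartic_branches (u₂ u₄ tu₄ : ℝ)
    (h₂ : 1 + u₂ ≠ 0) (h48 : 48 * u₂ + 2 ≠ 0)
    (tu₆₁ tu₆₂ : ℝ)
    (h61 : tu₆₁ = (144 / π) * tu₄ ^ 2 * u₄ / (1 + u₂) ^ 3)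
    (h62 : tu₆₂ = (48 / π) * tu₄ ^ 3 / (1 + u₂) ^ 3)
    (hflow2 : 2 * u₂ + (2 / π) * u₄ / (1 + u₂) ^ 2 + (1 / π) * tu₄ / (1 + u₂) ^ 2 = 0)
    (hflow4 : 4 * tu₄ + (4 / (3 * π)) * tu₆₁ / (1 + u₂) ^ 2
        + (2 / π) * tu₆₂ / (1 + u₂) ^ 2 - (8 / π) * tu₄ ^ 2 / (1 + u₂) ^ 3 = 0) :
    tu₄ = 0 ∨ tu₄ = π * (1 + u₂) ^ 3 / (48 * u₂ + 2) := by
  have hπ : (π : ℝ) ≠ 0 := Real.pi_ne_zero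
  subst h61 h62
  field_simp at hflow2 hflow4
  have hne : (12 : ℝ) * π ^ 3 * (1 + u₂) ^ 8 ≠ 0 := by positivity
  have E4 : π ^ 2 * (1 + u₂) ^ 5 * tu₄ + 48 * tu₄ ^ 2 * u₄ + 24 * tu₄ ^ 3
      - 2 * π * (1 + u₂) ^ 2 * tu₄ ^ 2 = 0 := by
    apply mul_left_cancel₀ hne
    linear_combination π ^ 3 * (1 + u₂) ^ 8 * hflow4
  have key' : π * (1 + u₂) ^ 2 * (tu₄ * ((48 * u₂ + 2) * tu₄ - π * (1 + u₂) ^ 3)) = 0 := by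
    linear_combination 24 * tu₄ ^ 2 * hflow2 - E4
  have key : tu₄ * ((48 * u₂ + 2) * tu₄ - π * (1 + u₂) ^ 3) = 0 :=
    (mul_eq_zero.mp key').resolve_left (mul_ne_zero hπ (pow_ne_zero 2 h₂))
  rcases mul_eq_zero.mp key with h | h
  · exact Or.inl h
  · right
    rw [eq_div_iff h48]
    linarith [h]
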